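/- arXiv:2106.02552 — 2 statements merged into one kernel-verified Lean document; each statement's English description precedes it below -/
import Mathlib

section
/- Consider the mixture model with mixing weight p ∈ (0,1). Suppose the support 𝒳₊ of 𝒫₊ decomposes into connected components 𝒳_{+,1},…,𝒳_{+,c} and set q := min_{i ∈ [c]} 𝒫₊(𝒳_{+,i}) > 0. Let 0 < δ < 1 and let (Y₁,Z₁),…,(Y_m,Z_m) be i.i.d. labeled samples from the mixture. If m ≥ max{ 2·log(2c/δ)/(p·log(1/(1−q))), 2·log(2/δ)/p² }, then with probability at least 1 − δ, for every i ∈ [c] there exists some index j with Y_j = + and Z_j ∈ 𝒳_{+,i}. -/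
open MeasureTheory Metric

/-- The mixture measure on labeled examples `(y, z) ∈ Bool × ℝ^D`:
with probability `p` draw a positive example (`y = true`) from `Pp`, and with
probability `1 - p` a negative example (`y = false`) from `Pm`. -/
noncomputable def mixture (D : ℕ) (p : ℝ)
    (Pp Pm : Measure (EuclideanSpace ℝ (Fin D))) :
    Measure (Bool × EuclideanSpace ℝ (Fin D)) :=
  ENNReal.ofReal p • (Measure.dirac true).prod Pp
    + ENNReal.ofReal (1 - p) • (Measure.dirac false).prod Pm

private lemma hoeffding_scalar_mix {p : ℝ} (hp0 : 0 < p) (hp1 : p < 1) :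
    1 - p + p * Real.exp (-(2 * p)) ≤ Real.exp (-(3 / 2) * p ^ 2) := by
  have hv : ∀ s : ℝ, 0 < 1 - p + p * Real.exp (-s) := fun s => by
    have := Real.exp_pos (-s); nlinarith
  set φ : ℝ → ℝ := fun s => Real.log (1 - p + p * Real.exp (-s)) + p * s - s ^ 2 / 8 with hφ
  set φ' : ℝ → ℝ := fun s =>
    -(p * Real.exp (-s)) / (1 - p + p * Real.exp (-s)) + p - s / 4 with hφ'
  set φ'' : ℝ → ℝ := fun s =>
    p * Real.exp (-s) * (1 - p) / (1 - p + p * Real.exp (-s)) ^ 2 - 1 / 4 with hφ''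
  have hder1 : ∀ s : ℝ, HasDerivAt φ (φ' s) s := by
    intro s
    have h0 : HasDerivAt (fun s : ℝ => -s) (-1) s := (hasDerivAt_id s).neg
    have h1 : HasDerivAt (fun s : ℝ => Real.exp (-s)) (Real.exp (-s) * (-1)) s := h0.exp
    have h2 : HasDerivAt (fun s : ℝ => 1 - p + p * Real.exp (-s))
        (p * (Real.exp (-s) * (-1))) s := (h1.const_mul p).const_add (1 - p)
    have h3 : HasDerivAt (fun s : ℝ => Real.log (1 - p + p * Real.exp (-s)))
        (p * (Real.exp (-s) * (-1)) / (1 - p + p * Real.exp (-s))) s := h2.log (hv s).ne'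
    have h4 : HasDerivAt (fun s : ℝ => p * s) p s := by
      simpa using (hasDerivAt_id s).const_mul p
    have h5 : HasDerivAt (fun s : ℝ => s ^ 2 / 8) (2 * s / 8) s := by
      simpa using (hasDerivAt_pow 2 s).div_const 8
    have h6 := (h3.add h4).sub h5
    refine h6.congr_deriv ?_
    simp [hφ']
    ring
  have hder2 : ∀ s : ℝ, HasDerivAt φ' (φ'' s) s := by
    intro s
    have h0 : HasDerivAt (fun s : ℝ => -s) (-1) s := (hasDerivAt_id s).neg
    have h1 : HasDerivAt (fun s : ℝ => Real.exp (-s)) (Real.exp (-s) * (-1)) s := h0.exp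
    have h2 : HasDerivAt (fun s : ℝ => -(p * Real.exp (-s)))
        (-(p * (Real.exp (-s) * (-1)))) s := (h1.const_mul p).neg
    have h3 : HasDerivAt (fun s : ℝ => 1 - p + p * Real.exp (-s))
        (p * (Real.exp (-s) * (-1))) s := (h1.const_mul p).const_add (1 - p)
    have h4 := h2.div h3 (hv s).ne'
    have h5 := h4.add_const p
    have h6 : HasDerivAt (fun s : ℝ => s / 4) (1 / 4) s := by
      simpa using (hasDerivAt_id s).div_const 4
    have h7 := h5.sub h6
    refine h7.congr_deriv ?_
    have hvs := (hv s).ne'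
    simp only [hφ'']
    field_simp
    ring
  have hφ''_nonpos : ∀ s : ℝ, φ'' s ≤ 0 := by
    intro s
    have he := Real.exp_pos (-s)
    have hvs := hv s
    simp only [hφ'']
    rw [sub_nonpos, div_le_iff₀ (by positivity)]
    nlinarith [sq_nonneg (1 - p - p * Real.exp (-s))]
  have hφ'_anti : AntitoneOn φ' (Set.Ici 0) := by
    apply antitoneOn_of_deriv_nonpos (convex_Ici 0)
    · exact fun s _ => (hder2 s).continuousAt.continuousWithinAt
    · exact fun s _ => (hder2 s).differentiableAt.differentiableWithinAt
    · intro s _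
      rw [(hder2 s).deriv]
      exact hφ''_nonpos s
  have hφ'0 : φ' 0 = 0 := by
    simp only [hφ']
    norm_num [Real.exp_zero]
  have hφ'_nonpos : ∀ s : ℝ, 0 ≤ s → φ' s ≤ 0 := by
    intro s hs
    have := hφ'_anti Set.self_mem_Ici hs hs
    rw [hφ'0] at this
    exact this
  have hφ_anti : AntitoneOn φ (Set.Ici 0) := by
    apply antitoneOn_of_deriv_nonpos (convex_Ici 0)
    · exact fun s _ => (hder1 s).continuousAt.continuousWithinAt
    · exact fun s _ => (hder1 s).differentiableAt.differentiableWithinAt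
    · intro s hs
      rw [interior_Ici] at hs
      rw [(hder1 s).deriv]
      exact hφ'_nonpos s hs.le
  have hφ0 : φ 0 = 0 := by
    simp only [hφ]
    norm_num [Real.exp_zero]
  have hkey : φ (2 * p) ≤ 0 := by
    have h2p : (0:ℝ) ≤ 2 * p := by positivity
    have h := hφ_anti Set.self_mem_Ici h2p h2p
    rw [hφ0] at h
    exact h
  have hlog : Real.log (1 - p + p * Real.exp (-(2 * p))) ≤ -(3 / 2) * p ^ 2 := by
    have h := hkey
    simp only [hφ] at h
    nlinarith [h]
  calc 1 - p + p * Real.exp (-(2 * p))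
      = Real.exp (Real.log (1 - p + p * Real.exp (-(2 * p)))) := (Real.exp_log (hv _)).symm
    _ ≤ Real.exp (-(3 / 2) * p ^ 2) := Real.exp_le_exp.2 hlog

private lemma sum_card_identity_mix (m : ℕ) (x y : ℝ) :
    ∑ S : Finset (Fin m), x ^ S.card * y ^ (m - S.card) = (x + y) ^ m := by
  classical
  have h := Finset.prod_add (fun _ : Fin m => x) (fun _ : Fin m => y) Finset.univ
  simp only [Finset.prod_const, Finset.powerset_univ, Finset.card_univ, Fintype.card_fin] at h
  rw [h]
  apply Finset.sum_congr rfl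
  intro S _
  congr 2
  rw [Finset.card_sdiff_of_subset (Finset.subset_univ S), Finset.card_univ, Fintype.card_fin]

/-- Chernoff bound for the lower binomial tail, in purely combinatorial form. -/
private lemma binom_tail_mix (p δ : ℝ) (hp0 : 0 < p) (hp1 : p < 1) (hδ0 : 0 < δ) (hδ1 : δ < 1)
    (m : ℕ) (hm : 2 * Real.log (2 / δ) / p ^ 2 ≤ (m : ℝ)) :
    ∑ S ∈ Finset.univ.filter (fun S : Finset (Fin m) => (S.card : ℝ) < (m : ℝ) * p / 2),
      p ^ S.card * (1 - p) ^ (m - S.card) ≤ δ / 2 := by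
  classical
  have hp1' : (0:ℝ) < 1 - p := by linarith
  have step1 : ∀ S ∈ Finset.univ.filter
      (fun S : Finset (Fin m) => (S.card : ℝ) < (m : ℝ) * p / 2),
      p ^ S.card * (1 - p) ^ (m - S.card) ≤
        Real.exp (p ^ 2 * m) *
          ((p * Real.exp (-(2 * p))) ^ S.card * (1 - p) ^ (m - S.card)) := by
    intro S hS
    rw [Finset.mem_filter] at hS
    have hcard := hS.2
    have h1 : (1 : ℝ) ≤ Real.exp (p ^ 2 * m) * Real.exp (-(2 * p)) ^ S.card := by
      rw [← Real.exp_nat_mul, ← Real.exp_add]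
      apply Real.one_le_exp
      nlinarith
    have hterm : (0:ℝ) ≤ p ^ S.card * (1 - p) ^ (m - S.card) := by positivity
    calc p ^ S.card * (1 - p) ^ (m - S.card)
        = 1 * (p ^ S.card * (1 - p) ^ (m - S.card)) := by ring
      _ ≤ (Real.exp (p ^ 2 * m) * Real.exp (-(2 * p)) ^ S.card) *
          (p ^ S.card * (1 - p) ^ (m - S.card)) := by
          exact mul_le_mul_of_nonneg_right h1 hterm
      _ = Real.exp (p ^ 2 * m) *
          ((p * Real.exp (-(2 * p))) ^ S.card * (1 - p) ^ (m - S.card)) := by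
          rw [mul_pow]; ring
  have step2 : ∑ S ∈ Finset.univ.filter
      (fun S : Finset (Fin m) => (S.card : ℝ) < (m : ℝ) * p / 2),
      p ^ S.card * (1 - p) ^ (m - S.card) ≤
      ∑ S : Finset (Fin m), Real.exp (p ^ 2 * m) *
        ((p * Real.exp (-(2 * p))) ^ S.card * (1 - p) ^ (m - S.card)) := by
    refine le_trans (Finset.sum_le_sum step1) ?_
    apply Finset.sum_le_sum_of_subset_of_nonneg (Finset.filter_subset _ _)
    intro S _ _
    positivity
  rw [← Finset.mul_sum, sum_card_identity_mix] at step2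
  have step3 : (p * Real.exp (-(2 * p)) + (1 - p)) ^ m ≤
      Real.exp (-(3 / 2) * p ^ 2) ^ m := by
    apply pow_le_pow_left₀ (by positivity)
    have := hoeffding_scalar_mix hp0 hp1
    linarith
  have step4 : Real.exp (p ^ 2 * m) * (p * Real.exp (-(2 * p)) + (1 - p)) ^ m ≤
      Real.exp (-(1 / 2) * p ^ 2 * m) := by
    calc Real.exp (p ^ 2 * m) * (p * Real.exp (-(2 * p)) + (1 - p)) ^ m
        ≤ Real.exp (p ^ 2 * m) * Real.exp (-(3 / 2) * p ^ 2) ^ m := by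
          exact mul_le_mul_of_nonneg_left step3 (Real.exp_pos _).le
      _ = Real.exp (-(1 / 2) * p ^ 2 * m) := by
          rw [← Real.exp_nat_mul, ← Real.exp_add]
          ring_nf
  have step5 : Real.exp (-(1 / 2) * p ^ 2 * m) ≤ δ / 2 := by
    have h2δ : (1:ℝ) < 2 / δ := by
      rw [lt_div_iff₀ hδ0]; linarith
    have hlog : 0 < Real.log (2 / δ) := Real.log_pos h2δ
    have hml : 2 * Real.log (2 / δ) ≤ (m:ℝ) * p ^ 2 := by
      rw [div_le_iff₀ (by positivity)] at hm
      linarith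
    have : -(1 / 2) * p ^ 2 * m ≤ Real.log (δ / 2) := by
      have h : Real.log (δ / 2) = -Real.log (2 / δ) := by
        rw [← Real.log_inv]
        congr 1
        field_simp
      rw [h]
      nlinarith
    calc Real.exp (-(1 / 2) * p ^ 2 * m) ≤ Real.exp (Real.log (δ / 2)) :=
          Real.exp_le_exp.2 this
      _ = δ / 2 := Real.exp_log (by positivity)
  exact le_trans step2 (le_trans step4 step5)

/-- The geometric bound for missing one component. -/
private lemma miss_sum_bound_mix (p q a δ : ℝ) (c m : ℕ) (hp0 : 0 < p) (hp1 : p < 1)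
    (hq0 : 0 < q) (hqa : q ≤ a) (ha1 : a ≤ 1) (hδ0 : 0 < δ) (hδ1 : δ < 1)
    (hc : 0 < c) (hk0 : 0 < (m : ℝ) * p / 2)
    (hm1 : 2 * Real.log (2 * c / δ) / (p * Real.log (1 / (1 - q))) ≤ (m : ℝ)) :
    ∑ S ∈ Finset.univ.filter (fun S : Finset (Fin m) => (m : ℝ) * p / 2 ≤ (S.card : ℝ)),
      (p * (1 - a)) ^ S.card * (1 - p) ^ (m - S.card) ≤ δ / (2 * c) := by
  classical
  have hp1' : (0:ℝ) < 1 - p := by linarith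
  have hc0 : (0:ℝ) < c := by exact_mod_cast hc
  rcases lt_or_ge q 1 with hq1 | hq1
  · have h1q : (0:ℝ) < 1 - q := by linarith
    have h1q1 : (1:ℝ) - q ≤ 1 := by linarith
    have ha0 : 0 ≤ 1 - a := by linarith
    have step1 : ∀ S ∈ Finset.univ.filter
        (fun S : Finset (Fin m) => (m : ℝ) * p / 2 ≤ (S.card : ℝ)),
        (p * (1 - a)) ^ S.card * (1 - p) ^ (m - S.card) ≤
          (1 - q) ^ ((m : ℝ) * p / 2) *
            (p ^ S.card * (1 - p) ^ (m - S.card)) := by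
      intro S hS
      rw [Finset.mem_filter] at hS
      have hcard := hS.2
      have h2 : (p * (1 - a)) ^ S.card ≤ (p * (1 - q)) ^ S.card := by
        apply pow_le_pow_left₀ (by positivity)
        nlinarith
      have h3 : ((1 : ℝ) - q) ^ S.card ≤ (1 - q) ^ ((m : ℝ) * p / 2) := by
        rw [← Real.rpow_natCast (1 - q) S.card]
        exact Real.rpow_le_rpow_of_exponent_ge h1q h1q1 hcard
      calc (p * (1 - a)) ^ S.card * (1 - p) ^ (m - S.card)
          ≤ (p * (1 - q)) ^ S.card * (1 - p) ^ (m - S.card) := by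
            exact mul_le_mul_of_nonneg_right h2 (by positivity)
        _ = (1 - q) ^ S.card * (p ^ S.card * (1 - p) ^ (m - S.card)) := by
            rw [mul_pow]; ring
        _ ≤ (1 - q) ^ ((m : ℝ) * p / 2) * (p ^ S.card * (1 - p) ^ (m - S.card)) := by
            exact mul_le_mul_of_nonneg_right h3 (by positivity)
    have step2 : ∑ S ∈ Finset.univ.filter
        (fun S : Finset (Fin m) => (m : ℝ) * p / 2 ≤ (S.card : ℝ)),
        (p * (1 - a)) ^ S.card * (1 - p) ^ (m - S.card) ≤
        ∑ S : Finset (Fin m), (1 - q) ^ ((m : ℝ) * p / 2) *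
          (p ^ S.card * (1 - p) ^ (m - S.card)) := by
      refine le_trans (Finset.sum_le_sum step1) ?_
      apply Finset.sum_le_sum_of_subset_of_nonneg (Finset.filter_subset _ _)
      intro S _ _
      have := Real.rpow_nonneg h1q.le ((m : ℝ) * p / 2)
      positivity
    rw [← Finset.mul_sum, sum_card_identity_mix] at step2
    have hsum1 : (p + (1 - p)) ^ m = 1 := by norm_num
    rw [hsum1, mul_one] at step2
    refine le_trans step2 ?_
    have hL : 0 < Real.log (1 / (1 - q)) := by
      apply Real.log_pos
      rw [lt_div_iff₀ h1q]; linarith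
    have hlogC : 0 < Real.log (2 * c / δ) := by
      apply Real.log_pos
      have hc1 : (1:ℝ) ≤ c := by exact_mod_cast hc
      rw [lt_div_iff₀ hδ0]; nlinarith
    have hmL : 2 * Real.log (2 * c / δ) ≤ (m : ℝ) * (p * Real.log (1 / (1 - q))) := by
      rw [div_le_iff₀ (by positivity)] at hm1
      linarith
    have hloginv : Real.log (1 / (1 - q)) = -Real.log (1 - q) := by
      rw [one_div, Real.log_inv]
    have hexp : (m : ℝ) * p / 2 * Real.log (1 - q) ≤ Real.log (δ / (2 * c)) := by
      have hlogd : Real.log (δ / (2 * c)) = -Real.log (2 * c / δ) := by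
        rw [← Real.log_inv]
        congr 1
        field_simp
      rw [hlogd]
      rw [hloginv] at hmL
      nlinarith
    calc (1 - q) ^ ((m : ℝ) * p / 2)
        = Real.exp ((m : ℝ) * p / 2 * Real.log (1 - q)) := by
          rw [Real.rpow_def_of_pos h1q]; ring_nf
      _ ≤ Real.exp (Real.log (δ / (2 * c))) := Real.exp_le_exp.2 hexp
      _ = δ / (2 * c) := Real.exp_log (by positivity)
  · have ha : a = 1 := le_antisymm ha1 (le_trans hq1 hqa)
    have hzero : ∑ S ∈ Finset.univ.filter
        (fun S : Finset (Fin m) => (m : ℝ) * p / 2 ≤ (S.card : ℝ)),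
        (p * (1 - a)) ^ S.card * (1 - p) ^ (m - S.card) = 0 := by
      apply Finset.sum_eq_zero
      intro S hS
      rw [Finset.mem_filter] at hS
      have hcard : S.card ≠ 0 := by
        intro h
        have h2 := hS.2
        rw [h] at h2
        norm_num at h2
        linarith
      rw [ha]
      simp [zero_pow hcard]
    rw [hzero]
    positivity

section MixtureLemmas

variable {D : ℕ} {p : ℝ} {Pp Pm : Measure (EuclideanSpace ℝ (Fin D))}
  [IsProbabilityMeasure Pp] [IsProbabilityMeasure Pm]

private lemma mixture_true (s : Set (EuclideanSpace ℝ (Fin D))) :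
    mixture D p Pp Pm {x | x.1 = true ∧ x.2 ∈ s} = ENNReal.ofReal p * Pp s := by
  have hset : {x : Bool × EuclideanSpace ℝ (Fin D) | x.1 = true ∧ x.2 ∈ s}
      = {true} ×ˢ s := by
    ext x
    simp only [Set.mem_setOf_eq, Set.mem_prod, Set.mem_singleton_iff]
  rw [hset, mixture, Measure.add_apply, Measure.smul_apply, Measure.smul_apply,
    Measure.prod_prod, Measure.prod_prod]
  have h1 : (Measure.dirac true) ({true} : Set Bool) = 1 := by simp
  have h2 : (Measure.dirac false) ({true} : Set Bool) = 0 := by simp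
  rw [h1, h2]
  simp [smul_eq_mul]

private lemma mixture_false :
    mixture D p Pp Pm {x | x.1 = false} = ENNReal.ofReal (1 - p) := by
  have hset : {x : Bool × EuclideanSpace ℝ (Fin D) | x.1 = false}
      = {false} ×ˢ (Set.univ : Set (EuclideanSpace ℝ (Fin D))) := by
    ext x
    simp only [Set.mem_setOf_eq, Set.mem_prod, Set.mem_singleton_iff, Set.mem_univ,
      and_true]
  rw [hset, mixture, Measure.add_apply, Measure.smul_apply, Measure.smul_apply,
    Measure.prod_prod, Measure.prod_prod]
  have h1 : (Measure.dirac true) ({false} : Set Bool) = 0 := by simp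
  have h2 : (Measure.dirac false) ({false} : Set Bool) = 1 := by simp
  rw [h1, h2]
  simp [smul_eq_mul]

private lemma mixture_isProbability (hp0 : 0 ≤ p) (hp1 : p ≤ 1) :
    IsProbabilityMeasure (mixture D p Pp Pm) := by
  constructor
  rw [← Set.univ_prod_univ, mixture, Measure.add_apply, Measure.smul_apply,
    Measure.smul_apply, Measure.prod_prod, Measure.prod_prod]
  simp only [measure_univ, mul_one, smul_eq_mul]
  rw [← ENNReal.ofReal_add hp0 (by linarith), ← ENNReal.ofReal_one]
  congr 1
  ring

end MixtureLemmas

private lemma pi_measure_le_sum {α : Type*} [MeasurableSpace α] (ν : Measure α)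
    [IsProbabilityMeasure ν] (m : ℕ) (U V : Set α) (𝒮 : Finset (Finset (Fin m)))
    (E : Set (Fin m → α))
    (hE : ∀ ω ∈ E, ∃ S ∈ 𝒮, (∀ j, j ∈ S → ω j ∈ U) ∧ (∀ j, j ∉ S → ω j ∈ V)) :
    Measure.pi (fun _ : Fin m => ν) E ≤ ∑ S ∈ 𝒮, ν U ^ S.card * ν V ^ (m - S.card) := by
  classical
  have hsub : E ⊆ ⋃ S ∈ 𝒮, Set.univ.pi (fun j => if j ∈ S then U else V) := by
    intro ω hω
    obtain ⟨S, hS, h1, h2⟩ := hE ω hω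
    refine Set.mem_biUnion hS ?_
    intro j _
    by_cases hj : j ∈ S
    · simp [hj, h1 j hj]
    · simp [hj, h2 j hj]
  refine le_trans (measure_mono hsub) ?_
  refine le_trans (measure_biUnion_finset_le 𝒮 _) ?_
  apply le_of_eq
  apply Finset.sum_congr rfl
  intro S _
  rw [Measure.pi_pi]
  have heq : ∀ j : Fin m, (fun _ : Fin m => ν) j (if j ∈ S then U else V)
      = if j ∈ S then ν U else ν V := by
    intro j; by_cases hj : j ∈ S <;> simp [hj]
  simp_rw [heq]
  rw [Finset.prod_ite]
  simp only [Finset.prod_const]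
  have hT : Finset.univ.filter (· ∈ S) = S := Finset.filter_univ_mem S
  have hcard : (Finset.univ.filter (fun x => ¬ x ∈ S)).card = m - S.card := by
    have h := Finset.card_filter_add_card_filter_not
      (s := (Finset.univ : Finset (Fin m))) (p := (· ∈ S))
    rw [hT, Finset.card_univ, Fintype.card_fin] at h
    omega
  rw [hT, hcard]

private lemma ofReal_sum_pow_mix (m : ℕ) (𝒮 : Finset (Finset (Fin m))) (x y : ℝ)
    (hx : 0 ≤ x) (hy : 0 ≤ y) :
    ∑ S ∈ 𝒮, ENNReal.ofReal x ^ S.card * ENNReal.ofReal y ^ (m - S.card)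
      = ENNReal.ofReal (∑ S ∈ 𝒮, x ^ S.card * y ^ (m - S.card)) := by
  rw [ENNReal.ofReal_sum_of_nonneg (fun S _ => by positivity)]
  apply Finset.sum_congr rfl
  intro S _
  rw [ENNReal.ofReal_mul (by positivity), ← ENNReal.ofReal_pow hx, ← ENNReal.ofReal_pow hy]

/-- If the support `𝒳₊` of `𝒫₊` decomposes into connected components
`𝒳₊,₁, …, 𝒳₊,c` and `q := min_i 𝒫₊(𝒳₊,ᵢ) > 0`, then for
`m ≥ max{2 log(2c/δ)/(p log(1/(1-q))), 2 log(2/δ)/p²}`, with probability at least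
`1 - δ` over the i.i.d. labeled sample of size `m` from the mixture, every connected
component contains a positively-labeled sample point. -/
theorem explore_hits_every_component
    (D : ℕ) (hD : 1 ≤ D) (p : ℝ) (hp0 : 0 < p) (hp1 : p < 1)
    (Pp Pm : Measure (EuclideanSpace ℝ (Fin D)))
    (hPp : IsProbabilityMeasure Pp) (hPm : IsProbabilityMeasure Pm)
    (Xp : Set (EuclideanSpace ℝ (Fin D)))
    (hXp_compact : IsCompact Xp) (hXp_full : Pp Xp = 1)
    (c : ℕ) (hc : 0 < c) (A : Fin c → Set (EuclideanSpace ℝ (Fin D)))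
    (hA_union : (⋃ i, A i) = Xp)
    (hA_conn : ∀ i, IsConnected (A i))
    (hA_disj : Pairwise (Function.onFun Disjoint A))
    (hA_max : ∀ i, ∀ T : Set (EuclideanSpace ℝ (Fin D)),
      T ⊆ Xp → IsPreconnected T → A i ⊆ T → T ⊆ A i)
    (q : ℝ) (hq_def : q = ⨅ i : Fin c, (Pp (A i)).toReal) (hq0 : 0 < q)
    (δ : ℝ) (hδ0 : 0 < δ) (hδ1 : δ < 1)
    (m : ℕ)
    (hm : max (2 * Real.log (2 * c / δ) / (p * Real.log (1 / (1 - q))))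
            (2 * Real.log (2 / δ) / p ^ 2) ≤ (m : ℝ)) :
    ENNReal.ofReal (1 - δ) ≤
      (Measure.pi fun _ : Fin m => mixture D p Pp Pm)
        {ω : Fin m → Bool × EuclideanSpace ℝ (Fin D) |
          ∀ i : Fin c, ∃ j : Fin m, (ω j).1 = true ∧ (ω j).2 ∈ A i} := by
  classical
  haveI hνP : IsProbabilityMeasure (mixture D p Pp Pm) :=
    mixture_isProbability hp0.le hp1.le
  set ν : Measure (Bool × EuclideanSpace ℝ (Fin D)) := mixture D p Pp Pm with hν
  set μ := Measure.pi (fun _ : Fin m => ν) with hμdef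
  haveI : IsProbabilityMeasure μ := by rw [hμdef]; infer_instance
  have hm1 : 2 * Real.log (2 * c / δ) / (p * Real.log (1 / (1 - q))) ≤ (m:ℝ) :=
    le_trans (le_max_left _ _) hm
  have hm2 : 2 * Real.log (2 / δ) / p ^ 2 ≤ (m:ℝ) := le_trans (le_max_right _ _) hm
  have h2δ : (1:ℝ) < 2 / δ := by rw [lt_div_iff₀ hδ0]; linarith
  have hmpos : (0:ℝ) < m := by
    have h1 := Real.log_pos h2δ
    have h2 : 0 < 2 * Real.log (2/δ) / p ^ 2 := by positivity
    linarith
  have hk0 : 0 < (m:ℝ) * p / 2 := by positivity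
  -- the components are closed, hence measurable
  have hXp_closed : IsClosed Xp := hXp_compact.isClosed
  have hA_sub : ∀ i, A i ⊆ Xp := fun i => hA_union ▸ Set.subset_iUnion A i
  have hA_closed : ∀ i, IsClosed (A i) := fun i =>
    isClosed_of_closure_subset (hA_max i _ (closure_minimal (hA_sub i) hXp_closed)
      (hA_conn i).isPreconnected.closure subset_closure)
  have hA_meas : ∀ i, MeasurableSet (A i) := fun i => (hA_closed i).measurableSet
  have hqa : ∀ i, q ≤ (Pp (A i)).toReal := by
    intro i
    rw [hq_def]
    exact ciInf_le (Set.Finite.bddBelow (Set.finite_range _)) i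
  have ha1 : ∀ i, (Pp (A i)).toReal ≤ 1 := fun i =>
    ENNReal.toReal_le_of_le_ofReal one_pos.le (by simpa using prob_le_one)
  -- per-coordinate measures
  have hνtrue : ν {x | x.1 = true} = ENNReal.ofReal p := by
    have h := mixture_true (D := D) (p := p) (Pp := Pp) (Pm := Pm) Set.univ
    simpa using h
  have hνfalse : ν {x | x.1 = false} = ENNReal.ofReal (1 - p) := mixture_false
  have hνU : ∀ i, ν {x | x.1 = true ∧ x.2 ∈ (A i)ᶜ}
      = ENNReal.ofReal (p * (1 - (Pp (A i)).toReal)) := by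
    intro i
    rw [hν, mixture_true ((A i)ᶜ)]
    have hcompl : Pp (A i)ᶜ = ENNReal.ofReal (1 - (Pp (A i)).toReal) := by
      rw [measure_compl (hA_meas i) (measure_ne_top _ _), measure_univ,
        ENNReal.ofReal_sub 1 ENNReal.toReal_nonneg, ENNReal.ofReal_one,
        ENNReal.ofReal_toReal (measure_ne_top Pp (A i))]
    rw [hcompl, ← ENNReal.ofReal_mul hp0.le]
  -- the two bad events
  set B : Set (Fin m → Bool × EuclideanSpace ℝ (Fin D)) :=
    {ω | ((Finset.univ.filter fun j => (ω j).1 = true).card : ℝ) < (m:ℝ) * p / 2}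
    with hB_def
  set M : Fin c → Set (Fin m → Bool × EuclideanSpace ℝ (Fin D)) :=
    fun i => {ω | ∀ j, ¬((ω j).1 = true ∧ (ω j).2 ∈ A i)} with hM_def
  -- bound for B
  have hBbound : μ B ≤ ENNReal.ofReal (δ / 2) := by
    have hle := pi_measure_le_sum ν m {x | x.1 = true} {x | x.1 = false}
      (Finset.univ.filter fun S : Finset (Fin m) => (S.card : ℝ) < (m:ℝ) * p / 2) B ?_
    · refine le_trans hle ?_
      rw [hνtrue, hνfalse, ofReal_sum_pow_mix m _ p (1 - p) hp0.le (by linarith)]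
      exact ENNReal.ofReal_le_ofReal (binom_tail_mix p δ hp0 hp1 hδ0 hδ1 m hm2)
    · intro ω hω
      refine ⟨Finset.univ.filter fun j => (ω j).1 = true, ?_, ?_, ?_⟩
      · rw [Finset.mem_filter]
        exact ⟨Finset.mem_univ _, hω⟩
      · intro j hj
        exact (Finset.mem_filter.1 hj).2
      · intro j hj
        have h : ¬ ((ω j).1 = true) := fun h =>
          hj (Finset.mem_filter.2 ⟨Finset.mem_univ _, h⟩)
        simpa using h
  -- bound for each M i \ B
  have hMbound : ∀ i, μ (M i \ B) ≤ ENNReal.ofReal (δ / (2 * c)) := by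
    intro i
    have hle := pi_measure_le_sum ν m {x | x.1 = true ∧ x.2 ∈ (A i)ᶜ} {x | x.1 = false}
      (Finset.univ.filter fun S : Finset (Fin m) => (m:ℝ) * p / 2 ≤ (S.card : ℝ))
      (M i \ B) ?_
    · refine le_trans hle ?_
      rw [hνU i, hνfalse, ofReal_sum_pow_mix m _ (p * (1 - (Pp (A i)).toReal)) (1 - p)
        (by nlinarith [ha1 i]) (by linarith)]
      exact ENNReal.ofReal_le_ofReal
        (miss_sum_bound_mix p q ((Pp (A i)).toReal) δ c m hp0 hp1 hq0 (hqa i) (ha1 i)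
          hδ0 hδ1 hc hk0 hm1)
    · rintro ω ⟨hωM, hωB⟩
      have hnotB : (m:ℝ) * p / 2 ≤ ((Finset.univ.filter fun j => (ω j).1 = true).card : ℝ) := by
        simp only [hB_def, Set.mem_setOf_eq, not_lt] at hωB
        exact hωB
      refine ⟨Finset.univ.filter fun j => (ω j).1 = true, ?_, ?_, ?_⟩
      · rw [Finset.mem_filter]
        exact ⟨Finset.mem_univ _, hnotB⟩
      · intro j hj
        have hjt := (Finset.mem_filter.1 hj).2
        refine ⟨hjt, ?_⟩
        intro hmem
        exact hωM j ⟨hjt, hmem⟩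
      · intro j hj
        have h : ¬ ((ω j).1 = true) := fun h =>
          hj (Finset.mem_filter.2 ⟨Finset.mem_univ _, h⟩)
        simpa using h
  -- union bound
  have hcover : {ω : Fin m → Bool × EuclideanSpace ℝ (Fin D) |
      ∀ i : Fin c, ∃ j : Fin m, (ω j).1 = true ∧ (ω j).2 ∈ A i}ᶜ
      ⊆ B ∪ ⋃ i, (M i \ B) := by
    intro ω hω
    simp only [Set.mem_compl_iff, Set.mem_setOf_eq, not_forall] at hω
    obtain ⟨i, hi⟩ := hω
    by_cases hB : ω ∈ B
    · exact Or.inl hB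
    · refine Or.inr (Set.mem_iUnion.2 ⟨i, ⟨?_, hB⟩⟩)
      intro j hj
      exact hi ⟨j, hj⟩
  have hcompl : μ {ω : Fin m → Bool × EuclideanSpace ℝ (Fin D) |
      ∀ i : Fin c, ∃ j : Fin m, (ω j).1 = true ∧ (ω j).2 ∈ A i}ᶜ ≤ ENNReal.ofReal δ := by
    calc μ {ω : Fin m → Bool × EuclideanSpace ℝ (Fin D) |
        ∀ i : Fin c, ∃ j : Fin m, (ω j).1 = true ∧ (ω j).2 ∈ A i}ᶜ
        ≤ μ (B ∪ ⋃ i, (M i \ B)) := measure_mono hcover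
      _ ≤ μ B + μ (⋃ i, (M i \ B)) := measure_union_le _ _
      _ ≤ μ B + ∑ i, μ (M i \ B) := by
          gcongr
          exact measure_iUnion_fintype_le μ _
      _ ≤ ENNReal.ofReal (δ/2) + ∑ _i : Fin c, ENNReal.ofReal (δ/(2*c)) :=
          add_le_add hBbound (Finset.sum_le_sum fun i _ => hMbound i)
      _ = ENNReal.ofReal (δ/2) + ENNReal.ofReal (δ/2) := by
          rw [Finset.sum_const, Finset.card_univ, Fintype.card_fin, nsmul_eq_mul]
          congr 1
          rw [← ENNReal.ofReal_natCast c, ← ENNReal.ofReal_mul (by positivity)]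
          congr 1
          have hc0 : (c:ℝ) ≠ 0 := by positivity
          field_simp
      _ = ENNReal.ofReal δ := by
          rw [← ENNReal.ofReal_add (by positivity) (by positivity)]
          congr 1
          ring
  have hge : (1:ENNReal) ≤ μ {ω : Fin m → Bool × EuclideanSpace ℝ (Fin D) |
      ∀ i : Fin c, ∃ j : Fin m, (ω j).1 = true ∧ (ω j).2 ∈ A i}
      + μ {ω : Fin m → Bool × EuclideanSpace ℝ (Fin D) |
      ∀ i : Fin c, ∃ j : Fin m, (ω j).1 = true ∧ (ω j).2 ∈ A i}ᶜ := by
    calc (1:ENNReal) = μ Set.univ := measure_univ.symm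
      _ = μ ({ω : Fin m → Bool × EuclideanSpace ℝ (Fin D) |
          ∀ i : Fin c, ∃ j : Fin m, (ω j).1 = true ∧ (ω j).2 ∈ A i}
          ∪ {ω : Fin m → Bool × EuclideanSpace ℝ (Fin D) |
          ∀ i : Fin c, ∃ j : Fin m, (ω j).1 = true ∧ (ω j).2 ∈ A i}ᶜ) := by
          rw [Set.union_compl_self]
      _ ≤ _ := measure_union_le _ _
  calc ENNReal.ofReal (1 - δ) = 1 - ENNReal.ofReal δ := by
        rw [ENNReal.ofReal_sub 1 hδ0.le, ENNReal.ofReal_one]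
    _ ≤ μ {ω : Fin m → Bool × EuclideanSpace ℝ (Fin D) |
        ∀ i : Fin c, ∃ j : Fin m, (ω j).1 = true ∧ (ω j).2 ∈ A i} := by
        rw [tsub_le_iff_right]
        exact hge.trans (add_le_add le_rfl hcompl)
end

section
/- There exists a universal constant C₀ > 0 such that the following holds. Consider the mixture model with mixing weight p ∈ (0,1), and suppose 𝒫₊ satisfies the positive-class regularity assumption with constants λ₀, r₀, C₊ and support 𝒳₊ having connected components 𝒳_{+,1},…,𝒳_{+,c}. Let 0 < δ < 1, let (Y₁,Z₁),…,(Y_n,Z_n) be i.i.d. labeled samples, let X₊ := {Z_j : Y_j = +} be the set of positive sample points, and set ε := 3·(C₀·D·log(2/δ)·log(n) / (p·C₊·λ₀·v_D·n))^{1/D}. If n is large enough that ε ≤ r₀, then with probability at least 1 − δ: for every i ∈ [c] and every pair of points x, x' ∈ 𝒳_{+,i} ∩ X₊, there is a finite sequence x = z₀, z₁, …, z_k = x' of points of X₊ with ‖z_j − z_{j+1}‖ ≤ ε for all j (i.e., 𝒳_{+,i} ∩ X₊ lies in a single connected component of the ε-neighborhood graph on X₊). -/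
open MeasureTheory Metric

/-- In a preconnected set `S` of a metric space, any two points are joined by an
`r`-chain lying in `S`. -/
lemma exists_chain_of_isPreconnected {X : Type*} [MetricSpace X] {S : Set X}
    (hS : IsPreconnected S) {x x' : X} (hx : x ∈ S) (hx' : x' ∈ S) {r : ℝ} (hr : 0 < r) :
    ∃ (k : ℕ) (w : ℕ → X), w 0 = x ∧ w k = x' ∧ (∀ l ≤ k, w l ∈ S) ∧
      ∀ l < k, dist (w l) (w (l + 1)) ≤ r := by
  classical
  set R : Set X := {y | ∃ (k : ℕ) (w : ℕ → X), w 0 = x ∧ w k = y ∧ (∀ l ≤ k, w l ∈ S) ∧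
      ∀ l < k, dist (w l) (w (l + 1)) ≤ r} with hR
  have hxR : x ∈ R := ⟨0, fun _ => x, rfl, rfl, fun l hl => by simpa using hx, fun l hl => by omega⟩
  -- extension lemma
  have hext : ∀ y ∈ R, ∀ z ∈ S, dist y z ≤ r → z ∈ R := by
    rintro y ⟨k, w, hw0, hwk, hwS, hwd⟩ z hz hdist
    refine ⟨k + 1, fun l => if l ≤ k then w l else z, by simp [hw0], by simp, ?_, ?_⟩
    · intro l hl
      by_cases h : l ≤ k
      · simpa [h] using hwS l h
      · simpa [h] using hz
    · intro l hl
      by_cases h : l < k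
      · have h1 : l ≤ k := h.le
        have h2 : l + 1 ≤ k := h
        simpa [h1, h2] using hwd l h
      · have hlk : l = k := by omega
        subst hlk
        have h1 : l ≤ l := le_refl l
        have h2 : ¬ (l + 1 ≤ l) := by omega
        simpa [h1, h2, hwk] using hdist
  by_contra hcon
  have hx'R : x' ∉ R := by
    intro h
    obtain ⟨k, w, h0, hk, hS', hd⟩ := h
    exact hcon ⟨k, w, h0, hk, hS', hd⟩
  -- clopen argument
  set U : Set X := ⋃ y ∈ S ∩ R, ball y r
  set V : Set X := ⋃ y ∈ S \ R, ball y r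
  have hU : IsOpen U := isOpen_biUnion fun _ _ => isOpen_ball
  have hV : IsOpen V := isOpen_biUnion fun _ _ => isOpen_ball
  have hcover : S ⊆ U ∪ V := by
    intro y hy
    by_cases h : y ∈ R
    · exact Or.inl (Set.mem_biUnion ⟨hy, h⟩ (mem_ball_self hr))
    · exact Or.inr (Set.mem_biUnion ⟨hy, h⟩ (mem_ball_self hr))
  have hSU : (S ∩ U).Nonempty := ⟨x, hx, Set.mem_biUnion ⟨hx, hxR⟩ (mem_ball_self hr)⟩
  have hSV : (S ∩ V).Nonempty := ⟨x', hx', Set.mem_biUnion ⟨hx', hx'R⟩ (mem_ball_self hr)⟩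
  obtain ⟨z, hzS, hzU, hzV⟩ := hS U V hU hV hcover hSU hSV
  obtain ⟨y, hy, hzy⟩ := Set.mem_iUnion₂.mp hzU
  obtain ⟨y', hy', hzy'⟩ := Set.mem_iUnion₂.mp hzV
  have hzR : z ∈ R := hext y hy.2 z hzS (by rw [dist_comm]; exact (mem_ball.mp hzy).le)
  exact hy'.2 (hext z hzR y' hy'.1 (mem_ball.mp hzy').le)

/-- A maximal `t`-separated subset of `S` exists whenever the cardinalities of
`t`-separated subsets are uniformly bounded; it is automatically a `t`-net. -/
lemma exists_separated_net {X : Type*} [MetricSpace X] (S : Set X) {t : ℝ} (ht : 0 < t) (K : ℕ)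
    (hK : ∀ F : Finset X, ↑F ⊆ S → (∀ a ∈ F, ∀ b ∈ F, a ≠ b → t < dist a b) → F.card ≤ K) :
    ∃ F : Finset X, ↑F ⊆ S ∧ (∀ a ∈ F, ∀ b ∈ F, a ≠ b → t < dist a b) ∧
      ∀ x ∈ S, ∃ y ∈ F, dist x y ≤ t := by
  classical
  set P : ℕ → Prop := fun k => ∃ F : Finset X, ↑F ⊆ S ∧
    (∀ a ∈ F, ∀ b ∈ F, a ≠ b → t < dist a b) ∧ F.card = k with hP
  have hP0 : P 0 := ⟨∅, by simp, by simp, by simp⟩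
  have hPmax : P (Nat.findGreatest P K) := Nat.findGreatest_spec (Nat.zero_le K) hP0
  obtain ⟨F, hFS, hFsep, hFcard⟩ := hPmax
  refine ⟨F, hFS, hFsep, ?_⟩
  intro x hx
  by_contra hcon
  push_neg at hcon
  have hxF : x ∉ F := by
    intro h
    have := hcon x h
    rw [dist_self] at this
    linarith
  have hsep' : ∀ a ∈ insert x F, ∀ b ∈ insert x F, a ≠ b → t < dist a b := by
    intro a ha b hb hab
    rcases Finset.mem_insert.mp ha with ha' | ha' <;>
      rcases Finset.mem_insert.mp hb with hb' | hb'
    · exact absurd (ha'.trans hb'.symm) hab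
    · subst ha'; exact hcon b hb'
    · subst hb'; rw [dist_comm]; exact hcon a ha'
    · exact hFsep a ha' b hb' hab
  have hsub : ↑(insert x F) ⊆ S := by
    intro a ha
    rcases Finset.mem_coe.mp ha with h
    rcases Finset.mem_insert.mp h with rfl | h
    · exact hx
    · exact hFS h
  have hcard : (insert x F).card = Nat.findGreatest P K + 1 := by
    rw [Finset.card_insert_of_notMem hxF, hFcard]
  have hle : Nat.findGreatest P K + 1 ≤ K := by
    have := hK (insert x F) hsub hsep'
    omega
  have : Nat.findGreatest P K + 1 ≤ Nat.findGreatest P K :=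
    Nat.le_findGreatest hle ⟨insert x F, hsub, hsep', hcard⟩
  omega

lemma mixture_apply_true (D : ℕ) (p : ℝ) (Pp Pm : Measure (EuclideanSpace ℝ (Fin D)))
    [SFinite Pp] [SFinite Pm] (B : Set (EuclideanSpace ℝ (Fin D))) :
    mixture D p Pp Pm (({true} : Set Bool) ×ˢ B) = ENNReal.ofReal p * Pp B := by
  rw [mixture, Measure.add_apply, Measure.smul_apply, Measure.smul_apply,
    Measure.prod_prod, Measure.prod_prod, Measure.dirac_apply' _ (measurableSet_singleton _),
    Measure.dirac_apply' _ (measurableSet_singleton _)]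
  simp [smul_eq_mul]

lemma mixture_prob (D : ℕ) (p : ℝ) (h0 : 0 ≤ p) (h1 : p ≤ 1)
    (Pp Pm : Measure (EuclideanSpace ℝ (Fin D)))
    [IsProbabilityMeasure Pp] [IsProbabilityMeasure Pm] :
    IsProbabilityMeasure (mixture D p Pp Pm) := by
  constructor
  rw [mixture, Measure.add_apply, Measure.smul_apply, Measure.smul_apply]
  simp only [measure_univ, smul_eq_mul, mul_one]
  rw [← ENNReal.ofReal_add h0 (by linarith)]
  norm_num

set_option maxHeartbeats 2000000 in
set_option maxRecDepth 16384 in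
/-- Connectedness lemma: there is a universal constant `C₀ > 0` such that under the
positive-class regularity assumptions, with `ε := 3(C₀ D log(2/δ) log n / (p C₊ λ₀ v_D n))^{1/D}`
and `n` large enough that `ε ≤ r₀`, with probability at least `1 - δ` over the i.i.d. labeled
sample of size `n`, for every connected component `𝒳₊,ᵢ` of `𝒳₊`, any two positive sample
points of `𝒳₊,ᵢ` are joined by an ε-chain of positive sample points. -/
theorem connectedness_of_positive_samples :
    ∃ C₀ : ℝ, 0 < C₀ ∧
      ∀ (D : ℕ), 1 ≤ D →
      ∀ (p : ℝ), 0 < p → p < 1 →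
      ∀ (Pp Pm : Measure (EuclideanSpace ℝ (Fin D))),
        IsProbabilityMeasure Pp → IsProbabilityMeasure Pm →
      ∀ (fp : EuclideanSpace ℝ (Fin D) → ENNReal), Pp = volume.withDensity fp →
      ∀ (Xp : Set (EuclideanSpace ℝ (Fin D))), IsCompact Xp → Pp Xp = 1 →
      ∀ (c : ℕ), 0 < c →
      ∀ (A : Fin c → Set (EuclideanSpace ℝ (Fin D))),
        (⋃ i, A i) = Xp →
        (∀ i, IsConnected (A i)) →
        Pairwise (Function.onFun Disjoint A) →
        (∀ i, ∀ T : Set (EuclideanSpace ℝ (Fin D)),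
          T ⊆ Xp → IsPreconnected T → A i ⊆ T → T ⊆ A i) →
      ∀ (lam0 r₀ Cp : ℝ), 0 < lam0 → 0 < r₀ → 0 < Cp →
        (∀ x ∈ Xp, ENNReal.ofReal lam0 ≤ fp x) →
        (∀ x ∈ Xp, ∀ r : ℝ, 0 < r → r < r₀ →
          ENNReal.ofReal Cp * volume (closedBall x r) ≤ volume (closedBall x r ∩ Xp)) →
      ∀ (δ : ℝ), 0 < δ → δ < 1 →
      ∀ (n : ℕ), 1 ≤ n →
      ∀ (ε : ℝ),
        ε = 3 * ((C₀ * D * Real.log (2 / δ) * Real.log n) /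
              (p * Cp * lam0 *
                (volume (closedBall (0 : EuclideanSpace ℝ (Fin D)) 1)).toReal * n))
            ^ (1 / (D : ℝ)) →
        ε ≤ r₀ →
        ENNReal.ofReal (1 - δ) ≤
          (Measure.pi fun _ : Fin n => mixture D p Pp Pm)
            {ω : Fin n → Bool × EuclideanSpace ℝ (Fin D) |
              ∀ i : Fin c, ∀ x ∈ A i, ∀ x' ∈ A i,
                (∃ j : Fin n, (ω j).1 = true ∧ (ω j).2 = x) →
                (∃ j : Fin n, (ω j).1 = true ∧ (ω j).2 = x') →
                ∃ k : ℕ, ∃ z : ℕ → EuclideanSpace ℝ (Fin D),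
                  z 0 = x ∧ z k = x' ∧
                  (∀ l ≤ k, ∃ j : Fin n, (ω j).1 = true ∧ (ω j).2 = z l) ∧
                  (∀ l < k, dist (z l) (z (l + 1)) ≤ ε)} := by
  classical
  refine ⟨300, by norm_num, ?_⟩
  intro D hD p hp0 hp1 Pp Pm hPp hPm fp hfp Xp hXpcomp hXp1 c hc A hAun hAconn hAdisj hAmax
    lam0 r₀ Cp hlam0 hr₀ hCp hflb hreg δ hδ0 hδ1 n hn ε hε hεr
  haveI hmixprob : IsProbabilityMeasure (mixture D p Pp Pm) :=
    mixture_prob D p hp0.le hp1.le Pp Pm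
  haveI : IsProbabilityMeasure (Measure.pi fun _ : Fin n => mixture D p Pp Pm) := by
    infer_instance
  rcases eq_or_lt_of_le hn with hn1 | hn2
  · -- trivial case n = 1
    have hn1' : n = 1 := hn1.symm
    subst hn1'
    have hset : {ω : Fin 1 → Bool × EuclideanSpace ℝ (Fin D) |
        ∀ i : Fin c, ∀ x ∈ A i, ∀ x' ∈ A i,
          (∃ j : Fin 1, (ω j).1 = true ∧ (ω j).2 = x) →
          (∃ j : Fin 1, (ω j).1 = true ∧ (ω j).2 = x') →
          ∃ k : ℕ, ∃ z : ℕ → EuclideanSpace ℝ (Fin D),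
            z 0 = x ∧ z k = x' ∧
            (∀ l ≤ k, ∃ j : Fin 1, (ω j).1 = true ∧ (ω j).2 = z l) ∧
            (∀ l < k, dist (z l) (z (l + 1)) ≤ ε)} = Set.univ := by
      apply Set.eq_univ_of_forall
      rintro ω i x hx x' hx' ⟨j, hj1, hj2⟩ ⟨j', hj1', hj2'⟩
      have hjj : j = j' := Subsingleton.elim j j'
      have hxx : x = x' := by rw [← hj2, hjj, hj2']
      refine ⟨0, fun _ => x, rfl, by rw [hxx], ?_, by omega⟩
      intro l hl
      exact ⟨j, hj1, hj2⟩
    rw [hset, measure_univ]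
    exact ENNReal.ofReal_le_one.mpr (by linarith)
  · -- main case n ≥ 2
    have hn2' : 2 ≤ n := hn2
    have hD0 : (0:ℝ) < D := by exact_mod_cast Nat.lt_of_lt_of_le Nat.zero_lt_one hD
    have hD1 : (1:ℝ) ≤ D := by exact_mod_cast hD
    have hDne : (D:ℝ) ≠ 0 := ne_of_gt hD0
    have hnpos : (0:ℝ) < n := by positivity
    have hn2R : (2:ℝ) ≤ n := by exact_mod_cast hn2'
    obtain ⟨VB, hVB⟩ : ∃ v : ENNReal,
        v = volume (closedBall (0 : EuclideanSpace ℝ (Fin D)) 1) := ⟨_, rfl⟩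
    have hVBpos : 0 < VB := by
      rw [hVB]
      exact lt_of_lt_of_le (measure_ball_pos volume 0 one_pos)
        (measure_mono ball_subset_closedBall)
    have hVBfin : VB ≠ ⊤ := by rw [hVB]; exact measure_closedBall_lt_top.ne
    obtain ⟨V, hV⟩ : ∃ v : ℝ, v = VB.toReal := ⟨_, rfl⟩
    have hVpos : 0 < V := by rw [hV]; exact ENNReal.toReal_pos hVBpos.ne' hVBfin
    obtain ⟨L, hLdef⟩ : ∃ l : ℝ, l = Real.log (2 / δ) := ⟨_, rfl⟩
    obtain ⟨ln, hlndef⟩ : ∃ l : ℝ, l = Real.log n := ⟨_, rfl⟩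
    have hlog2 : (2:ℝ)/3 < Real.log 2 := by
      have := Real.log_two_gt_d9; linarith
    have hLge : (2:ℝ)/3 ≤ L := by
      have h2 : (2:ℝ) ≤ 2/δ := by
        rw [le_div_iff₀ hδ0]; linarith
      have := Real.log_le_log (by norm_num) h2
      rw [hLdef]; linarith
    have hlnge : (2:ℝ)/3 ≤ ln := by
      have := Real.log_le_log (by norm_num) hn2R
      rw [hlndef]; linarith
    have hLpos : 0 < L := by linarith
    have hlnpos : 0 < ln := by linarith
    obtain ⟨β, hβdef⟩ : ∃ b : ℝ, b = p * Cp * lam0 * V := ⟨_, rfl⟩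
    have hβpos : 0 < β := by
      rw [hβdef]; exact mul_pos (mul_pos (mul_pos hp0 hCp) hlam0) hVpos
    obtain ⟨X, hXdef⟩ : ∃ x : ℝ, x = 300 * (D:ℝ) * L * ln / (β * n) := ⟨_, rfl⟩
    have hXpos : 0 < X := by
      rw [hXdef]
      apply div_pos
      · exact mul_pos (mul_pos (mul_pos (by norm_num : (0:ℝ) < 300) hD0) hLpos) hlnpos
      · exact mul_pos hβpos hnpos
    obtain ⟨ρ, hρdef⟩ : ∃ r : ℝ, r = X ^ (1 / (D:ℝ)) := ⟨_, rfl⟩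
    have hρpos : 0 < ρ := by rw [hρdef]; exact Real.rpow_pos_of_pos hXpos _
    have hρD : ρ ^ D = X := by
      rw [hρdef, ← Real.rpow_natCast (X ^ (1 / (D:ℝ))) D, ← Real.rpow_mul hXpos.le,
        one_div, inv_mul_cancel₀ hDne, Real.rpow_one]
    have hερ : ε = 3 * ρ := by
      rw [hρdef, hXdef, hβdef, hV, hVB, hLdef, hlndef]
      exact hε
    have hεpos : 0 < ε := by rw [hερ]; linarith
    obtain ⟨u, hudef⟩ : ∃ v : ℝ, v = ε / 2 * (1 - 1 / (2 * (D:ℝ))) := ⟨_, rfl⟩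
    obtain ⟨t, htdef⟩ : ∃ v : ℝ, v = ε / (6 * (D:ℝ)) := ⟨_, rfl⟩
    have hhalf : 1 / (2 * (D:ℝ)) ≤ 1/2 := by
      rw [div_le_div_iff₀ (by positivity) (by norm_num)]
      linarith
    have hhalfpos : (0:ℝ) < 1 - 1 / (2 * (D:ℝ)) := by linarith
    have hupos : 0 < u := by
      rw [hudef]; exact mul_pos (by linarith) hhalfpos
    have hu_le : u ≤ ε / 2 := by
      rw [hudef]
      have h1 : 1 - 1 / (2 * (D:ℝ)) ≤ 1 := by
        have : 0 ≤ 1 / (2 * (D:ℝ)) := by positivity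
        linarith
      exact mul_le_of_le_one_right (by linarith) h1
    have hur₀ : u < r₀ := by linarith
    have htpos : 0 < t := by
      rw [htdef]; positivity
    have ht3pos : 0 < t / 3 := by positivity
    have ht3r₀ : t / 3 < r₀ := by
      have h6 : (6:ℝ) ≤ 6 * D := by linarith
      have : t ≤ ε / 6 := by
        rw [htdef]
        exact div_le_div_of_nonneg_left hεpos.le (by norm_num) h6
      linarith
    obtain ⟨q, hqdef⟩ : ∃ v : ℝ, v = β * u ^ D := ⟨_, rfl⟩
    have hqpos : 0 < q := by
      rw [hqdef]; exact mul_pos hβpos (pow_pos hupos D)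
    have hXpmeas : MeasurableSet Xp := hXpcomp.isClosed.measurableSet
    have hPpXp : ∫⁻ x in Xp, fp x = 1 := by
      rw [← withDensity_apply fp hXpmeas, ← hfp]
      exact hXp1
    have hlbint : ∀ T : Set (EuclideanSpace ℝ (Fin D)), MeasurableSet T → T ⊆ Xp →
        ENNReal.ofReal lam0 * volume T ≤ ∫⁻ x in T, fp x := by
      intro T hTmeas hTXp
      rw [← setLIntegral_const]
      refine lintegral_mono_ae ?_
      refine (ae_restrict_iff' hTmeas).mpr (ae_of_all _ ?_)
      exact fun x hx => hflb x (hTXp hx)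
    have hvolXp : volume Xp ≤ ENNReal.ofReal (1 / lam0) := by
      have h1 : ENNReal.ofReal lam0 * volume Xp ≤ 1 := by
        rw [← hPpXp]
        exact hlbint Xp hXpmeas subset_rfl
      rw [one_div, ENNReal.ofReal_inv_of_pos hlam0]
      rw [ENNReal.le_inv_iff_mul_le, mul_comm]
      exact h1
    have hvol_cb : ∀ (y : EuclideanSpace ℝ (Fin D)) (r : ℝ), 0 ≤ r →
        volume (closedBall y r) = ENNReal.ofReal (r ^ D) * VB := by
      intro y r hr
      rw [hVB, Measure.addHaar_closedBall' volume y hr, finrank_euclideanSpace_fin]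
    have hball : ∀ y ∈ Xp,
        ENNReal.ofReal q ≤ mixture D p Pp Pm (({true} : Set Bool) ×ˢ closedBall y u) := by
      intro y hy
      rw [mixture_apply_true]
      have h1 : Pp (closedBall y u) = ∫⁻ x in closedBall y u, fp x := by
        rw [hfp, withDensity_apply fp measurableSet_closedBall]
      have h2 := hlbint (closedBall y u ∩ Xp) (measurableSet_closedBall.inter hXpmeas)
        Set.inter_subset_right
      have h3 := hreg y hy u hupos hur₀
      have h4 : volume (closedBall y u) = ENNReal.ofReal (u ^ D) * VB := hvol_cb y u hupos.le
      have harg : q = p * (lam0 * (Cp * (u ^ D * V))) := by rw [hqdef, hβdef]; ring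
      calc ENNReal.ofReal q
          = ENNReal.ofReal p * (ENNReal.ofReal lam0 * (ENNReal.ofReal Cp *
              (ENNReal.ofReal (u ^ D) * VB))) := by
            rw [harg, ENNReal.ofReal_mul hp0.le, ENNReal.ofReal_mul hlam0.le,
              ENNReal.ofReal_mul hCp.le, ENNReal.ofReal_mul (pow_nonneg hupos.le D), hV,
              ENNReal.ofReal_toReal hVBfin]
        _ = ENNReal.ofReal p * (ENNReal.ofReal lam0 *
              (ENNReal.ofReal Cp * volume (closedBall y u))) := by rw [h4]
        _ ≤ ENNReal.ofReal p * (ENNReal.ofReal lam0 * volume (closedBall y u ∩ Xp)) := by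
            gcongr
        _ ≤ ENNReal.ofReal p * (∫⁻ x in closedBall y u ∩ Xp, fp x) := by
            gcongr
        _ ≤ ENNReal.ofReal p * (∫⁻ x in closedBall y u, fp x) := by
            gcongr
            exact Set.inter_subset_left
        _ = ENNReal.ofReal p * Pp (closedBall y u) := by rw [h1]
    have hXpne : Xp.Nonempty := by
      by_contra h
      rw [Set.not_nonempty_iff_eq_empty] at h
      rw [h] at hXp1
      simp at hXp1
    obtain ⟨x₀, hx₀⟩ := hXpne
    have hq1 : q ≤ 1 := by
      have h := (hball x₀ hx₀).trans prob_le_one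
      exact ENNReal.ofReal_le_one.mp h
    -- packing bound
    obtain ⟨Areal, hArealdef⟩ : ∃ a : ℝ, a = 1 / (lam0 * Cp * V * (t / 3) ^ D) := ⟨_, rfl⟩
    have hdenpos : 0 < lam0 * Cp * V * (t / 3) ^ D :=
      mul_pos (mul_pos (mul_pos hlam0 hCp) hVpos) (pow_pos ht3pos D)
    have hApos : 0 < Areal := by
      rw [hArealdef]; exact one_div_pos.mpr hdenpos
    have hpack : ∀ F : Finset (EuclideanSpace ℝ (Fin D)), ↑F ⊆ Xp →
        (∀ a ∈ F, ∀ b ∈ F, a ≠ b → t < dist a b) → (F.card : ℝ) ≤ Areal := by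
      intro F hFXp hFsep
      have hdisj : (↑F : Set (EuclideanSpace ℝ (Fin D))).PairwiseDisjoint
          (fun y => closedBall y (t / 3) ∩ Xp) := by
        intro a ha b hb hab
        have hd : t / 3 + t / 3 < dist a b := by
          have := hFsep a ha b hb hab
          linarith
        exact (closedBall_disjoint_closedBall hd).mono Set.inter_subset_left
          Set.inter_subset_left
      have hmeas : ∀ b ∈ F, MeasurableSet (closedBall b (t / 3) ∩ Xp) :=
        fun b _ => measurableSet_closedBall.inter hXpmeas
      have hsum := measure_biUnion_finset (μ := volume) hdisj hmeas
      have hsub : (⋃ y ∈ F, closedBall y (t / 3) ∩ Xp) ⊆ Xp := by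
        simp only [Set.iUnion_subset_iff]
        exact fun y _ => Set.inter_subset_right
      have hlow : ∀ y ∈ F, ENNReal.ofReal (Cp * ((t / 3) ^ D * V)) ≤
          volume (closedBall y (t / 3) ∩ Xp) := by
        intro y hy
        have h3 := hreg y (hFXp hy) (t / 3) ht3pos ht3r₀
        calc ENNReal.ofReal (Cp * ((t / 3) ^ D * V))
            = ENNReal.ofReal Cp * (ENNReal.ofReal ((t / 3) ^ D) * VB) := by
              rw [ENNReal.ofReal_mul hCp.le, ENNReal.ofReal_mul (pow_nonneg ht3pos.le D), hV,
                ENNReal.ofReal_toReal hVBfin]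
          _ = ENNReal.ofReal Cp * volume (closedBall y (t / 3)) := by
              rw [hvol_cb y (t / 3) ht3pos.le]
          _ ≤ volume (closedBall y (t / 3) ∩ Xp) := h3
      have hkey : (F.card : ENNReal) * ENNReal.ofReal (Cp * ((t / 3) ^ D * V)) ≤
          ENNReal.ofReal (1 / lam0) := by
        calc (F.card : ENNReal) * ENNReal.ofReal (Cp * ((t / 3) ^ D * V))
            = ∑ _y ∈ F, ENNReal.ofReal (Cp * ((t / 3) ^ D * V)) := by
              rw [Finset.sum_const, nsmul_eq_mul]
          _ ≤ ∑ y ∈ F, volume (closedBall y (t / 3) ∩ Xp) := Finset.sum_le_sum hlow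
          _ = volume (⋃ y ∈ F, closedBall y (t / 3) ∩ Xp) := hsum.symm
          _ ≤ volume Xp := measure_mono hsub
          _ ≤ ENNReal.ofReal (1 / lam0) := hvolXp
      rw [← ENNReal.ofReal_natCast, ← ENNReal.ofReal_mul (Nat.cast_nonneg _)] at hkey
      have hreal := (ENNReal.ofReal_le_ofReal_iff (by positivity)).mp hkey
      rw [hArealdef, le_div_iff₀ hdenpos]
      have h2 : lam0 * ((F.card : ℝ) * (Cp * ((t / 3) ^ D * V))) ≤ lam0 * (1 / lam0) :=
        mul_le_mul_of_nonneg_left hreal hlam0.le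
      rw [mul_one_div_cancel hlam0.ne'] at h2
      calc (F.card : ℝ) * (lam0 * Cp * V * (t / 3) ^ D)
          = lam0 * ((F.card : ℝ) * (Cp * ((t / 3) ^ D * V))) := by ring
        _ ≤ 1 := h2
    -- the net
    obtain ⟨Y, hYXp, hYsep, hYnet⟩ := exists_separated_net Xp htpos ⌊Areal⌋₊
      (fun F h1 h2 => Nat.le_floor (hpack F h1 h2))
    have hYcard : (Y.card : ℝ) ≤ Areal := hpack Y hYXp hYsep
    -- the bad event
    obtain ⟨Sy, hSydef⟩ : ∃ f : EuclideanSpace ℝ (Fin D) → Set (Bool × EuclideanSpace ℝ (Fin D)),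
        f = fun y => ({true} : Set Bool) ×ˢ closedBall y u := ⟨_, rfl⟩
    have hSmeas : ∀ y, MeasurableSet (Sy y) := by
      intro y
      rw [hSydef]
      exact (measurableSet_singleton true).prod measurableSet_closedBall
    obtain ⟨Bad, hBaddef⟩ : ∃ B : Set (Fin n → Bool × EuclideanSpace ℝ (Fin D)),
        B = ⋃ y ∈ Y, Set.univ.pi (fun _ : Fin n => (Sy y)ᶜ) := ⟨_, rfl⟩
    have hBadmeas : MeasurableSet Bad := by
      rw [hBaddef]
      exact MeasurableSet.biUnion Y.countable_toSet
        (fun y _ => MeasurableSet.univ_pi (fun _ => (hSmeas y).compl))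
    have hμpi : ∀ y : EuclideanSpace ℝ (Fin D),
        (Measure.pi fun _ : Fin n => mixture D p Pp Pm)
          (Set.univ.pi fun _ : Fin n => (Sy y)ᶜ) = (mixture D p Pp Pm ((Sy y)ᶜ)) ^ n := by
      intro y
      rw [Measure.pi_pi]
      simp [Finset.prod_const]
    have hcompl : ∀ y ∈ Y, mixture D p Pp Pm ((Sy y)ᶜ) ≤ ENNReal.ofReal (1 - q) := by
      intro y hy
      have h1 : mixture D p Pp Pm ((Sy y)ᶜ) = 1 - mixture D p Pp Pm (Sy y) := by
        rw [measure_compl (hSmeas y) (measure_ne_top _ _), measure_univ]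
      have h2 : ENNReal.ofReal q ≤ mixture D p Pp Pm (Sy y) := by
        rw [hSydef]
        exact hball y (hYXp (Finset.mem_coe.mpr hy))
      rw [h1]
      calc 1 - mixture D p Pp Pm (Sy y) ≤ 1 - ENNReal.ofReal q := tsub_le_tsub_left h2 1
        _ = ENNReal.ofReal (1 - q) := by
            rw [ENNReal.ofReal_sub 1 hqpos.le, ENNReal.ofReal_one]
    have hBadle : (Measure.pi fun _ : Fin n => mixture D p Pp Pm) Bad ≤
        ENNReal.ofReal ((Y.card : ℝ) * (1 - q) ^ n) := by
      rw [hBaddef]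
      calc (Measure.pi fun _ : Fin n => mixture D p Pp Pm)
            (⋃ y ∈ Y, Set.univ.pi (fun _ : Fin n => (Sy y)ᶜ))
          ≤ ∑ y ∈ Y, (Measure.pi fun _ : Fin n => mixture D p Pp Pm)
              (Set.univ.pi fun _ : Fin n => (Sy y)ᶜ) := measure_biUnion_finset_le Y _
        _ ≤ ∑ _y ∈ Y, ENNReal.ofReal ((1 - q) ^ n) := by
            refine Finset.sum_le_sum (fun y hy => ?_)
            rw [hμpi y, ENNReal.ofReal_pow (by linarith : (0:ℝ) ≤ 1 - q) n]
            exact pow_le_pow_left' (hcompl y hy) n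
        _ = Y.card • ENNReal.ofReal ((1 - q) ^ n) := by rw [Finset.sum_const]
        _ = ENNReal.ofReal ((Y.card : ℝ) * (1 - q) ^ n) := by
            rw [nsmul_eq_mul, ← ENNReal.ofReal_natCast Y.card,
              ← ENNReal.ofReal_mul (Nat.cast_nonneg _)]
    -- the final real-number inequality
    have hYδ : (Y.card : ℝ) * (1 - q) ^ n ≤ δ := by
      have h6Dpos : (0:ℝ) < 6 * D := by linarith
      have h6DDpos : (0:ℝ) < (6 * (D:ℝ)) ^ D := pow_pos h6Dpos D
      have h32pos : (0:ℝ) < (3/2 : ℝ) ^ D := by positivity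
      -- (1-q)^n ≤ exp(-(n q))
      have hexpq : (1 - q) ^ n ≤ Real.exp (-((n:ℝ) * q)) := by
        have h1 : 1 - q ≤ Real.exp (-q) := by
          have := Real.add_one_le_exp (-q); linarith
        have h2 : (1 - q) ^ n ≤ Real.exp (-q) ^ n := pow_le_pow_left₀ (by linarith) h1 n
        rwa [← Real.exp_nat_mul, mul_neg] at h2
      -- Bernoulli bounds
      have hBern32 : 1 + (D:ℝ) / 2 ≤ (3/2 : ℝ) ^ D := by
        have h := one_add_mul_le_pow (by norm_num : (-2:ℝ) ≤ 1/2) D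
        calc 1 + (D:ℝ)/2 = 1 + (D:ℝ) * (1/2) := by ring
          _ ≤ ((1:ℝ) + 1/2) ^ D := h
          _ = (3/2 : ℝ) ^ D := by norm_num
      have hBernD : (1/2 : ℝ) ≤ (1 - 1/(2*(D:ℝ))) ^ D := by
        have h := one_add_mul_le_pow (show (-2:ℝ) ≤ -(1/(2*(D:ℝ))) by linarith) D
        have hDhalf : (D:ℝ) * (1/(2*(D:ℝ))) = 1/2 := by field_simp
        calc (1/2 : ℝ) = 1 + (D:ℝ) * (-(1/(2*(D:ℝ)))) := by rw [mul_neg, hDhalf]; ring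
          _ ≤ ((1:ℝ) + -(1/(2*(D:ℝ)))) ^ D := h
          _ = (1 - 1/(2*(D:ℝ))) ^ D := by ring_nf
      -- n q lower bound
      have huρ : u = (3/2) * (1 - 1/(2*(D:ℝ))) * ρ := by rw [hudef, hερ]; ring
      have huD : u ^ D = (3/2 : ℝ)^D * (1 - 1/(2*(D:ℝ)))^D * ρ^D := by
        rw [huρ, mul_pow, mul_pow]
      have hβρ : β * ρ ^ D = 300 * (D:ℝ) * L * ln / n := by
        rw [hρD, hXdef]
        field_simp
      have hnq : 150 * (3/2 : ℝ)^D * D * L * ln ≤ (n:ℝ) * q := by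
        have he1 : (n:ℝ) * q = (3/2:ℝ)^D * (1 - 1/(2*(D:ℝ)))^D * ((n:ℝ) * (β * ρ^D)) := by
          rw [hqdef, huD]; ring
        have he2 : (n:ℝ) * (300 * (D:ℝ) * L * ln / n) = 300 * (D:ℝ) * L * ln := by
          field_simp
        rw [he1, hβρ, he2]
        have hc : (0:ℝ) ≤ (3/2:ℝ)^D * (300 * (D:ℝ) * L * ln) := by
          have : (0:ℝ) ≤ 300 * (D:ℝ) * L * ln := by
            have := mul_nonneg (mul_nonneg (mul_nonneg (by norm_num : (0:ℝ) ≤ 300) hD0.le)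
              hLpos.le) hlnpos.le
            linarith
          exact mul_nonneg h32pos.le this
        have := mul_le_mul_of_nonneg_left hBernD hc
        linarith [this]
      -- Areal upper bound
      have hden_eq : lam0 * Cp * V * (t/3)^D = 300 * (D:ℝ) * L * ln / (p * n * (6*(D:ℝ))^D) := by
        have ht3 : t/3 = ρ/(6*(D:ℝ)) := by rw [htdef, hερ]; ring
        rw [ht3, div_pow, hρD, hXdef, hβdef]
        field_simp
      have hLln : (4:ℝ)/9 ≤ L * ln := by
        have h := mul_le_mul hLge hlnge (by norm_num) (by linarith)
        linarith
      have hLln0 : (0:ℝ) ≤ L * ln := le_trans (by norm_num) hLln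
      have hDLln : (4:ℝ)/9 ≤ (D:ℝ) * (L * ln) := by
        have h := mul_le_mul_of_nonneg_right hD1 hLln0
        linarith
      have hpos300 : (0:ℝ) < 300 * (D:ℝ) * L * ln := by
        have := mul_pos (mul_pos (mul_pos (by norm_num : (0:ℝ) < 300) hD0) hLpos) hlnpos
        linarith
      have h300 : p ≤ 300 * (D:ℝ) * L * ln := by
        have he : 300 * ((D:ℝ) * (L * ln)) = 300 * (D:ℝ) * L * ln := by ring
        have h1 : 300 * (4/9 : ℝ) ≤ 300 * ((D:ℝ) * (L*ln)) := by linarith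
        linarith [he ▸ h1, hp1]
      have hA_le : Areal ≤ (6*(D:ℝ))^D * n := by
        rw [hArealdef, hden_eq]
        have heq : (1:ℝ) / (300 * (D:ℝ) * L * ln / (p * n * (6*(D:ℝ))^D)) =
            ((6*(D:ℝ))^D * n) * (p / (300 * (D:ℝ) * L * ln)) := by
          field_simp
        rw [heq]
        have hp300 : p / (300 * (D:ℝ) * L * ln) ≤ 1 := by
          rw [div_le_one hpos300]
          exact h300
        calc ((6*(D:ℝ))^D * n) * (p / (300 * (D:ℝ) * L * ln)) ≤ ((6*(D:ℝ))^D * n) * 1 :=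
              mul_le_mul_of_nonneg_left hp300 (by positivity)
          _ = (6*(D:ℝ))^D * n := by ring
      -- exp M lower bound
      have hlog6D : Real.log (6*(D:ℝ)) ≤ 6*D := by
        have := Real.log_le_sub_one_of_pos h6Dpos
        linarith
      have hMlog : (D:ℝ) * Real.log (6*(D:ℝ)) + L + ln ≤ 150 * (3/2:ℝ)^D * D * L * ln := by
        have hLln0 : (0:ℝ) ≤ L * ln := le_trans (by norm_num) hLln
        have h1 : (D:ℝ) * Real.log (6*(D:ℝ)) ≤ (D:ℝ) * (6*(D:ℝ)) :=
          mul_le_mul_of_nonneg_left hlog6D hD0.le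
        have h2' := mul_le_mul_of_nonneg_left hLln
          (show (0:ℝ) ≤ 75*(D:ℝ)^2 by positivity)
        have h2 : 6*(D:ℝ)^2 ≤ 75*(D:ℝ)^2*(L*ln) := by
          have hsq : (0:ℝ) ≤ (D:ℝ)^2 := sq_nonneg _
          linarith [h2']
        have h3 : L*(2/3) ≤ L*ln := mul_le_mul_of_nonneg_left hlnge hLpos.le
        have h3' : ln*(2/3) ≤ ln*L := mul_le_mul_of_nonneg_left hLge hlnpos.le
        have hc : (0:ℝ) ≤ 150*(D:ℝ)*(L*ln) :=
          mul_nonneg (mul_nonneg (by norm_num) hD0.le) hLln0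
        have h5 := mul_le_mul_of_nonneg_left hBern32 hc
        have h6 := mul_le_mul_of_nonneg_right
          (show (3:ℝ) ≤ 150*(D:ℝ) by linarith) hLln0
        have hDsq : (D:ℝ) * (6*(D:ℝ)) = 6*(D:ℝ)^2 := by ring
        rw [hDsq] at h1
        linarith [h1, h2, h3, h3', h5, h6]
      have hexpM : (6*(D:ℝ))^D * ((2/δ)*n) ≤ Real.exp (150 * (3/2:ℝ)^D * D * L * ln) := by
        have heq : Real.exp ((D:ℝ) * Real.log (6*(D:ℝ)) + L + ln) = (6*(D:ℝ))^D * ((2/δ)*n) := by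
          rw [Real.exp_add, Real.exp_add, Real.exp_nat_mul, Real.exp_log h6Dpos, hLdef,
            Real.exp_log (by positivity : (0:ℝ) < 2/δ), hlndef, Real.exp_log hnpos]
          ring
        rw [← heq]
        exact Real.exp_le_exp.mpr hMlog
      -- combine
      have hstep1 : (Y.card : ℝ) * (1 - q) ^ n ≤ Areal * Real.exp (-((n:ℝ) * q)) := by
        have hpow_nonneg : (0:ℝ) ≤ (1 - q)^n := pow_nonneg (by linarith) n
        exact mul_le_mul hYcard hexpq hpow_nonneg hApos.le
      have hstep2 : Areal * Real.exp (-((n:ℝ) * q)) ≤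
          ((6*(D:ℝ))^D * n) * Real.exp (-(150 * (3/2:ℝ)^D * D * L * ln)) := by
        refine mul_le_mul hA_le (Real.exp_le_exp.mpr (by linarith [hnq])) (Real.exp_nonneg _) ?_
        exact mul_nonneg h6DDpos.le hnpos.le
      have hstep3 : ((6*(D:ℝ))^D * n) * Real.exp (-(150 * (3/2:ℝ)^D * D * L * ln)) ≤ δ := by
        have hEpos : (0:ℝ) < Real.exp (150 * (3/2:ℝ)^D * D * L * ln) := Real.exp_pos _
        have h2δpos : (0:ℝ) < (6*(D:ℝ))^D * ((2/δ)*n) := by positivity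
        calc ((6*(D:ℝ))^D * n) * Real.exp (-(150 * (3/2:ℝ)^D * D * L * ln))
            = ((6*(D:ℝ))^D * n) / Real.exp (150 * (3/2:ℝ)^D * D * L * ln) := by
              rw [Real.exp_neg]; ring
          _ ≤ ((6*(D:ℝ))^D * n) / ((6*(D:ℝ))^D * ((2/δ)*n)) := by
              apply div_le_div_of_nonneg_left (mul_nonneg h6DDpos.le hnpos.le) h2δpos hexpM
          _ = δ/2 := by
              field_simp
          _ ≤ δ := by linarith
      linarith [hstep1, hstep2, hstep3]
    -- the good event implies the chaining property
    have hgood : Badᶜ ⊆ {ω : Fin n → Bool × EuclideanSpace ℝ (Fin D) |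
        ∀ i : Fin c, ∀ x ∈ A i, ∀ x' ∈ A i,
          (∃ j : Fin n, (ω j).1 = true ∧ (ω j).2 = x) →
          (∃ j : Fin n, (ω j).1 = true ∧ (ω j).2 = x') →
          ∃ k : ℕ, ∃ z : ℕ → EuclideanSpace ℝ (Fin D),
            z 0 = x ∧ z k = x' ∧
            (∀ l ≤ k, ∃ j : Fin n, (ω j).1 = true ∧ (ω j).2 = z l) ∧
            (∀ l < k, dist (z l) (z (l + 1)) ≤ ε)} := by
      intro ω hω
      have hω' : ∀ y ∈ Y, ∃ j : Fin n, ω j ∈ Sy y := by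
        intro y hy
        by_contra hcontra
        push_neg at hcontra
        apply hω
        rw [hBaddef]
        refine Set.mem_biUnion hy ?_
        rw [Set.mem_univ_pi]
        intro j
        exact hcontra j
      intro i x hx x' hx' hsx hsx'
      obtain ⟨jx, hjx1, hjx2⟩ := hsx
      obtain ⟨jx', hjx1', hjx2'⟩ := hsx'
      obtain ⟨k, w, hw0, hwk, hwS, hwd⟩ :=
        exists_chain_of_isPreconnected (hAconn i).isPreconnected hx hx' htpos
      have hAXp : A i ⊆ Xp := by rw [← hAun]; exact Set.subset_iUnion A i
      have Hs : ∀ l : ℕ, ∃ sl : EuclideanSpace ℝ (Fin D),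
          (∃ j : Fin n, (ω j).1 = true ∧ (ω j).2 = sl) ∧ dist sl (w (min l k)) ≤ t + u := by
        intro l
        have hwl : w (min l k) ∈ Xp := hAXp (hwS _ (min_le_right l k))
        obtain ⟨y, hyY, hy⟩ := hYnet _ hwl
        obtain ⟨j, hj⟩ := hω' y hyY
        rw [hSydef, Set.mem_prod] at hj
        refine ⟨(ω j).2, ⟨j, Set.mem_singleton_iff.mp hj.1, rfl⟩, ?_⟩
        calc dist (ω j).2 (w (min l k)) ≤ dist (ω j).2 y + dist y (w (min l k)) :=
              dist_triangle _ _ _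
          _ ≤ u + t := add_le_add (mem_closedBall.mp hj.2) (by rw [dist_comm]; exact hy)
          _ = t + u := by ring
      choose sf hs1 hs2 using Hs
      obtain ⟨z, hz⟩ : ∃ z : ℕ → EuclideanSpace ℝ (Fin D),
          z = fun l => if l = 0 then x else if k ≤ l then x' else sf l := ⟨_, rfl⟩
      have hzval : ∀ m : ℕ, z m = if m = 0 then x else if k ≤ m then x' else sf m :=
        fun m => by rw [hz]
      have hz0 : z 0 = x := by rw [hzval 0]; simp
      have hzk : z k = x' := by
        by_cases hk : k = 0
        · subst hk
          rw [hz0, ← hw0]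
          exact hwk
        · rw [hzval k, if_neg hk, if_pos (le_refl k)]
      refine ⟨k, z, hz0, hzk, ?_, ?_⟩
      · intro l hl
        rw [hzval l]
        by_cases h0 : l = 0
        · rw [if_pos h0]; exact ⟨jx, hjx1, hjx2⟩
        · by_cases hkl : k ≤ l
          · rw [if_neg h0, if_pos hkl]; exact ⟨jx', hjx1', hjx2'⟩
          · rw [if_neg h0, if_neg hkl]; exact hs1 l
      · intro l hl
        have hkey : ∀ m, m ≤ k → dist (z m) (w m) ≤ t + u := by
          intro m hm
          rw [hzval m]
          by_cases h0 : m = 0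
          · rw [if_pos h0, h0, hw0, dist_self]
            linarith
          · by_cases hkm : k ≤ m
            · have hmk : m = k := le_antisymm hm hkm
              rw [if_neg h0, if_pos hkm, hmk, hwk, dist_self]
              linarith
            · rw [if_neg h0, if_neg hkm]
              have h := hs2 m
              rw [min_eq_left hm] at h
              exact h
        have h1 := hkey l (le_of_lt hl)
        have h2 := hkey (l+1) hl
        have h3 := hwd l hl
        have htri := dist_triangle4 (z l) (w l) (w (l+1)) (z (l+1))
        have h2' : dist (w (l+1)) (z (l+1)) ≤ t + u := by rw [dist_comm]; exact h2
        have hsum : (t + u) + t + (t + u) = ε := by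
          rw [htdef, hudef]
          field_simp
          ring
        linarith [htri, h1, h3, h2']
    calc ENNReal.ofReal (1 - δ) = 1 - ENNReal.ofReal δ := by
          rw [ENNReal.ofReal_sub 1 hδ0.le, ENNReal.ofReal_one]
      _ ≤ 1 - (Measure.pi fun _ : Fin n => mixture D p Pp Pm) Bad := by
          exact tsub_le_tsub_left (hBadle.trans (ENNReal.ofReal_le_ofReal hYδ)) 1
      _ = (Measure.pi fun _ : Fin n => mixture D p Pp Pm) Badᶜ := by
          rw [measure_compl hBadmeas (measure_ne_top _ _), measure_univ]
      _ ≤ _ := measure_mono hgood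
end
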